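/- There exists a function u₀ ∈ V with Au₀ = u₀, i.e. u₀ is continuous on [ε,Λ], satisfies 0 < w(x) ≤ u₀(x) ≤ (λ/4)·√Λ for all x ∈ [ε,Λ], and satisfies the Maskawa–Nakajima equation u₀(x) = (λ/2)·∫_ε^Λ [1/(y + x + |y − x|)]·[y·u₀(y)/(y + u₀(y)²)] dy for all x ∈ [ε,Λ]. -/

import Mathlib

open Real Set MeasureTheory intervalIntegral

/-- The function `w(x) = (4ε/λ)·√(ε/(Λx))`. -/
noncomputable def wfun (lam ε Λ : ℝ) (x : ℝ) : ℝ :=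
  (4 * ε / lam) * Real.sqrt (ε / (Λ * x))

/-- The nonlinear integral operator `A`. -/
noncomputable def opA (lam ε Λ : ℝ) (u : ℝ → ℝ) (x : ℝ) : ℝ :=
  (lam / 2) * ∫ y in ε..Λ, (1 / (y + x + |y - x|)) * (y * u y / (y + (u y) ^ 2))

/-- Membership in the set `V`: continuous on `[ε,Λ]` and `w(x) ≤ u(x) ≤ (λ/4)√Λ` there. -/
def memV (lam ε Λ : ℝ) (u : ℝ → ℝ) : Prop :=
  ContinuousOn u (Set.Icc ε Λ) ∧
    ∀ x ∈ Set.Icc ε Λ, wfun lam ε Λ x ≤ u x ∧ u x ≤ (lam / 4) * Real.sqrt Λ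

namespace MN

lemma g_mono {y u v : ℝ} (hy : 0 < y) (hu : 0 ≤ u) (huv : u ≤ v) (h : u*v ≤ y) :
    y*u/(y+u^2) ≤ y*v/(y+v^2) := by
  rw [div_le_div_iff₀ (by positivity) (by positivity)]
  nlinarith [mul_nonneg (mul_nonneg hy.le (sub_nonneg.2 huv)) (sub_nonneg.2 h)]


lemma g_anti {y u v : ℝ} (hy : 0 < y) (hu : 0 < u) (huv : u ≤ v) (h : y ≤ u*v) :
    y*v/(y+v^2) ≤ y*u/(y+u^2) := by
  rw [div_le_div_iff₀ (by positivity) (by positivity)]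
  nlinarith [mul_nonneg (mul_nonneg hy.le (sub_nonneg.2 huv)) (sub_nonneg.2 h)]


lemma g_le_half_sqrt {y u : ℝ} (hy : 0 < y) (hu : 0 ≤ u) :
    y*u/(y+u^2) ≤ Real.sqrt y / 2 := by
  have hs : 0 < Real.sqrt y := Real.sqrt_pos.2 hy
  have hs2 : Real.sqrt y ^ 2 = y := Real.sq_sqrt hy.le
  rw [div_le_div_iff₀ (by positivity) (by norm_num)]
  nlinarith [sq_nonneg (Real.sqrt y - u), mul_nonneg (mul_nonneg hs.le hs.le) hu]


lemma integral_inv_sqrt {a b : ℝ} (ha : 0 < a) (hab : a ≤ b) :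
    ∫ y in a..b, (Real.sqrt y)⁻¹ = 2*Real.sqrt b - 2*Real.sqrt a := by
  have h : ∀ y ∈ Set.uIcc a b, HasDerivAt (fun t => 2*Real.sqrt t) (Real.sqrt y)⁻¹ y := by
    intro y hy
    rw [Set.uIcc_of_le hab] at hy
    have hy0 : 0 < y := lt_of_lt_of_le ha hy.1
    have hs : (0:ℝ) < Real.sqrt y := Real.sqrt_pos.2 hy0
    have := (Real.hasDerivAt_sqrt hy0.ne').const_mul 2
    refine this.congr_deriv ?_
    field_simp
  have hint : IntervalIntegrable (fun y => (Real.sqrt y)⁻¹) volume a b := by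
    apply ContinuousOn.intervalIntegrable
    apply ContinuousOn.inv₀ (Real.continuous_sqrt.continuousOn)
    intro y hy
    rw [Set.uIcc_of_le hab] at hy
    exact (Real.sqrt_pos.2 (lt_of_lt_of_le ha hy.1)).ne'
  rw [intervalIntegral.integral_eq_sub_of_hasDerivAt h hint]


lemma integral_inv_mul_sqrt {a b : ℝ} (ha : 0 < a) (hab : a ≤ b) :
    ∫ y in a..b, (y * Real.sqrt y)⁻¹ = 2*(Real.sqrt a)⁻¹ - 2*(Real.sqrt b)⁻¹ := by
  have h : ∀ y ∈ Set.uIcc a b, HasDerivAt (fun t => -2*(Real.sqrt t)⁻¹) (y * Real.sqrt y)⁻¹ y := by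
    intro y hy
    rw [Set.uIcc_of_le hab] at hy
    have hy0 : 0 < y := lt_of_lt_of_le ha hy.1
    have hs : 0 < Real.sqrt y := Real.sqrt_pos.2 hy0
    have hs2 : Real.sqrt y ^ 2 = y := Real.sq_sqrt hy0.le
    have := ((Real.hasDerivAt_sqrt hy0.ne').inv hs.ne').const_mul (-2)
    refine this.congr_deriv ?_
    field_simp
    nlinarith [hs2]
  have hint : IntervalIntegrable (fun y => (y * Real.sqrt y)⁻¹) volume a b := by
    apply ContinuousOn.intervalIntegrable
    apply ContinuousOn.inv₀ ((continuous_id.mul Real.continuous_sqrt).continuousOn)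
    intro y hy
    rw [Set.uIcc_of_le hab] at hy
    have hy0 : 0 < y := lt_of_lt_of_le ha hy.1
    have := Real.sqrt_pos.2 hy0
    show y * Real.sqrt y ≠ 0
    positivity
  rw [intervalIntegral.integral_eq_sub_of_hasDerivAt h hint]
  ring


lemma integrand_contOn {ε Λ : ℝ} (hε : 0 < ε) {x : ℝ} (hx : ε ≤ x) {u : ℝ → ℝ}
    (hu : Continuous u) :
    ContinuousOn (fun y => (1 / (y + x + |y - x|)) * (y * u y / (y + (u y) ^ 2)))
      (Set.Icc ε Λ) := by
  apply ContinuousOn.mul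
  · apply ContinuousOn.div continuousOn_const
    · exact ((continuous_id.add continuous_const).add
        ((continuous_id.sub continuous_const).abs)).continuousOn
    · intro y hy
      have h0 : 0 ≤ |y - x| := abs_nonneg _
      have h1 : ε ≤ y := hy.1
      exact ne_of_gt (by linarith)
  · apply ContinuousOn.div
    · exact (continuous_id.mul hu).continuousOn
    · exact (continuous_id.add (hu.pow 2)).continuousOn
    · intro y hy
      have h1 : ε ≤ y := hy.1
      have h2 : (0:ℝ) ≤ u y ^ 2 := sq_nonneg _
      exact ne_of_gt (by linarith)


lemma kernel_le_inv_two_y {x y : ℝ} (hy : 0 < y) (hx : 0 < x) :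
    1 / (y + x + |y - x|) ≤ 1 / (2 * y) := by
  have h1 : y - x ≤ |y - x| := le_abs_self _
  apply one_div_le_one_div_of_le (by positivity)
  linarith


theorem opA_le {ε Λ lam : ℝ} (hε : 0 < ε) (hεΛ : ε < Λ) (hlam : 0 < lam) {u : ℝ → ℝ}
    (hu : Continuous u) (hnn : ∀ y ∈ Set.Icc ε Λ, 0 ≤ u y) {x : ℝ} (hx : x ∈ Set.Icc ε Λ) :
    opA lam ε Λ u x ≤ lam / 4 * Real.sqrt Λ := by
  have hint1 : IntervalIntegrable
      (fun y => (1 / (y + x + |y - x|)) * (y * u y / (y + (u y) ^ 2))) volume ε Λ := by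
    apply ContinuousOn.intervalIntegrable
    rw [Set.uIcc_of_le hεΛ.le]
    exact integrand_contOn hε hx.1 hu
  have hint2 : IntervalIntegrable (fun y => (1/4 : ℝ) * (Real.sqrt y)⁻¹) volume ε Λ := by
    apply ContinuousOn.intervalIntegrable
    rw [Set.uIcc_of_le hεΛ.le]
    apply ContinuousOn.mul continuousOn_const
    apply ContinuousOn.inv₀ Real.continuous_sqrt.continuousOn
    intro y hy
    exact (Real.sqrt_pos.2 (lt_of_lt_of_le hε hy.1)).ne'
  have key : ∀ y ∈ Set.Icc ε Λ,
      (1 / (y + x + |y - x|)) * (y * u y / (y + (u y) ^ 2)) ≤ (1/4 : ℝ) * (Real.sqrt y)⁻¹ := by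
    intro y hy
    have hy0 : 0 < y := lt_of_lt_of_le hε hy.1
    have hx0 : 0 < x := lt_of_lt_of_le hε hx.1
    have h1 : 1 / (y + x + |y - x|) ≤ 1 / (2*y) := kernel_le_inv_two_y hy0 hx0
    have h2 : y * u y / (y + (u y)^2) ≤ Real.sqrt y / 2 := g_le_half_sqrt hy0 (hnn y hy)
    have h3 : 0 ≤ y * u y / (y + (u y)^2) := by
      have := hnn y hy
      have : (0:ℝ) ≤ u y ^ 2 := sq_nonneg _
      positivity
    calc (1 / (y + x + |y - x|)) * (y * u y / (y + (u y) ^ 2))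
        ≤ (1/(2*y)) * (Real.sqrt y / 2) :=
          mul_le_mul h1 h2 h3 (by positivity)
      _ = (1/4 : ℝ) * (Real.sqrt y)⁻¹ := by
          have hss : Real.sqrt y * Real.sqrt y = y := Real.mul_self_sqrt hy0.le
          have hs : 0 < Real.sqrt y := Real.sqrt_pos.2 hy0
          field_simp
          nlinarith [hss]
  have hmono := intervalIntegral.integral_mono_on hεΛ.le hint1 hint2 key
  have hval : ∫ y in ε..Λ, (1/4 : ℝ) * (Real.sqrt y)⁻¹
      = (1/4) * (2*Real.sqrt Λ - 2*Real.sqrt ε) := by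
    rw [intervalIntegral.integral_const_mul, integral_inv_sqrt hε hεΛ.le]
  rw [opA]
  have hse : 0 ≤ Real.sqrt ε := Real.sqrt_nonneg _
  have hsL : 0 ≤ Real.sqrt Λ := Real.sqrt_nonneg _
  rw [hval] at hmono
  nlinarith [hmono]


theorem opA_contOn {ε Λ lam : ℝ} (hε : 0 < ε) (hεΛ : ε < Λ) (hlam : 0 < lam) {u : ℝ → ℝ}
    (hu : Continuous u) (hnn : ∀ y ∈ Set.Icc ε Λ, 0 ≤ u y) :
    ContinuousOn (opA lam ε Λ u) (Set.Icc ε Λ) := by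
  set C : ℝ := (lam/2) * ((Real.sqrt Λ / 2) * (1/(2*ε^2)) * (Λ - ε)) with hC
  have hC0 : 0 ≤ C := by
    have : 0 ≤ Real.sqrt Λ := Real.sqrt_nonneg _
    have h1 : (0:ℝ) ≤ Λ - ε := by linarith
    positivity
  have key : ∀ x ∈ Set.Icc ε Λ, ∀ x' ∈ Set.Icc ε Λ,
      dist (opA lam ε Λ u x) (opA lam ε Λ u x') ≤ C * dist x x' := by
    intro x hx x' hx'
    have hint1 : IntervalIntegrable
        (fun y => (1 / (y + x + |y - x|)) * (y * u y / (y + (u y) ^ 2))) volume ε Λ := by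
      apply ContinuousOn.intervalIntegrable
      rw [Set.uIcc_of_le hεΛ.le]; exact integrand_contOn hε hx.1 hu
    have hint2 : IntervalIntegrable
        (fun y => (1 / (y + x' + |y - x'|)) * (y * u y / (y + (u y) ^ 2))) volume ε Λ := by
      apply ContinuousOn.intervalIntegrable
      rw [Set.uIcc_of_le hεΛ.le]; exact integrand_contOn hε hx'.1 hu
    rw [Real.dist_eq, Real.dist_eq]
    rw [opA, opA, ← mul_sub, ← intervalIntegral.integral_sub hint1 hint2]
    rw [abs_mul]
    have hbound : ∀ y ∈ Set.uIoc ε Λ,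
        ‖(1 / (y + x + |y - x|)) * (y * u y / (y + (u y) ^ 2))
          - (1 / (y + x' + |y - x'|)) * (y * u y / (y + (u y) ^ 2))‖
        ≤ (Real.sqrt Λ / 2) * (1/(2*ε^2)) * |x - x'| := by
      intro y hy
      rw [Set.uIoc_of_le hεΛ.le] at hy
      have hy0 : 0 < y := lt_trans hε hy.1
      have hyε : ε ≤ y := hy.1.le
      have hD : 2*ε ≤ y + x + |y - x| := by
        have : 0 ≤ |y - x| := abs_nonneg _
        have := hx.1; linarith
      have hD' : 2*ε ≤ y + x' + |y - x'| := by
        have : 0 ≤ |y - x'| := abs_nonneg _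
        have := hx'.1; linarith
      have hDpos : (0:ℝ) < y + x + |y - x| := by linarith
      have hD'pos : (0:ℝ) < y + x' + |y - x'| := by linarith
      have hg0 : 0 ≤ y * u y / (y + (u y)^2) := by
        have h4 := hnn y ⟨hyε, hy.2⟩
        have : (0:ℝ) ≤ u y ^ 2 := sq_nonneg _
        positivity
      have hgle : y * u y / (y + (u y)^2) ≤ Real.sqrt Λ / 2 := by
        refine le_trans (g_le_half_sqrt hy0 (hnn y ⟨hyε, hy.2⟩)) ?_
        have := Real.sqrt_le_sqrt hy.2
        linarith
      rw [← sub_mul, Real.norm_eq_abs, abs_mul]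
      have hDdiff : |(y + x' + |y - x'|) - (y + x + |y - x|)| ≤ 2 * |x - x'| := by
        have h5 : |(|y - x'|) - (|y - x|)| ≤ |x - x'| := by
          have := abs_abs_sub_abs_le_abs_sub (y - x') (y - x)
          have h6 : (y - x') - (y - x) = x - x' := by ring
          rw [h6] at this
          exact this
        calc |(y + x' + |y - x'|) - (y + x + |y - x|)|
            = |(x' - x) + ((|y - x'|) - (|y - x|))| := by ring_nf
          _ ≤ |x' - x| + |(|y - x'|) - (|y - x|)| := abs_add_le _ _
          _ ≤ |x - x'| + |x - x'| := by rw [abs_sub_comm x' x]; linarith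
          _ = 2 * |x - x'| := by ring
      have h7 : |1 / (y + x + |y - x|) - 1 / (y + x' + |y - x'|)| ≤ (1/(2*ε^2)) * |x - x'| := by
        rw [div_sub_div _ _ (ne_of_gt hDpos) (ne_of_gt hD'pos)]
        rw [abs_div]
        rw [div_le_iff₀ (by positivity)]
        have h8 : |1 * (y + x' + |y - x'|) - (y + x + |y - x|) * 1| ≤ 2 * |x - x'| := by
          simpa using hDdiff
        have h9 : 4 * ε^2 ≤ |(y + x + |y - x|) * (y + x' + |y - x'|)| := by
          rw [abs_of_pos (by positivity)]
          nlinarith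
        calc |1 * (y + x' + |y - x'|) - (y + x + |y - x|) * 1| ≤ 2 * |x - x'| := h8
          _ ≤ (1/(2*ε^2)) * |x - x'| * (4*ε^2) := by
              rw [show (1/(2*ε^2)) * |x - x'| * (4*ε^2) = 2 * |x-x'| * (ε^2/ε^2) by ring,
                div_self (by positivity), mul_one]
          _ ≤ (1/(2*ε^2)) * |x - x'| * |(y + x + |y - x|) * (y + x' + |y - x'|)| := by
              have : (0:ℝ) ≤ (1/(2*ε^2)) * |x - x'| := by positivity
              exact mul_le_mul_of_nonneg_left h9 this
      calc |1 / (y + x + |y - x|) - 1 / (y + x' + |y - x'|)| * |y * u y / (y + (u y)^2)|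
          ≤ ((1/(2*ε^2)) * |x - x'|) * (Real.sqrt Λ / 2) := by
            apply mul_le_mul h7 _ (abs_nonneg _) (by positivity)
            rw [abs_of_nonneg hg0]; exact hgle
        _ = (Real.sqrt Λ / 2) * (1/(2*ε^2)) * |x - x'| := by ring
    have := intervalIntegral.norm_integral_le_of_norm_le_const hbound
    rw [Real.norm_eq_abs] at this
    have hlam2 : |lam / 2| = lam / 2 := abs_of_pos (by positivity)
    rw [hlam2]
    calc lam/2 * |∫ y in ε..Λ, ((1 / (y + x + |y - x|)) * (y * u y / (y + (u y) ^ 2))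
          - (1 / (y + x' + |y - x'|)) * (y * u y / (y + (u y) ^ 2)))|
        ≤ lam/2 * ((Real.sqrt Λ / 2) * (1/(2*ε^2)) * |x - x'| * |Λ - ε|) := by
          apply mul_le_mul_of_nonneg_left this (by positivity)
      _ = C * |x - x'| := by
          rw [hC, abs_of_pos (by linarith : (0:ℝ) < Λ - ε)]
          ring
      _ = C * dist x x' := by rw [Real.dist_eq]
  have : LipschitzOnWith C.toNNReal (opA lam ε Λ u) (Set.Icc ε Λ) := by
    apply LipschitzOnWith.of_dist_le_mul
    intro x hx x' hx'
    rw [Real.coe_toNNReal C hC0]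
    exact key x hx x' hx'
  exact this.continuousOn


lemma core_lower {se sL sy lam v : ℝ} (hse : 0 < se) (h1 : se ≤ sy) (h2 : sy ≤ sL)
    (hlam : 2 < lam) (hv1 : 4*se^3/(lam*sL*sy) ≤ v) (hv2 : v ≤ lam/4*sL) :
    (4*se^3/(lam*sL*sy)) / (1 + 16*se^2/(lam^2*sL^2)) ≤ sy^2*v/(sy^2+v^2) := by
  have hsy : 0 < sy := lt_of_lt_of_le hse h1
  have hsL : 0 < sL := lt_of_lt_of_le hsy h2
  have hlam0 : (0:ℝ) < lam := by linarith
  set W := 4*se^3/(lam*sL*sy) with hW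
  set c := 1 + 16*se^2/(lam^2*sL^2) with hc
  have hW0 : 0 < W := by rw [hW]; positivity
  have hc0 : 0 < c := by rw [hc]; positivity
  have hv0 : 0 < v := lt_of_lt_of_le hW0 hv1
  clear_value W c
  rcases le_total v sy with hcase | hcase
  · have hmono := g_mono (y := sy^2) (u := W) (v := v) (by positivity) hW0.le hv1
      (by nlinarith)
    refine le_trans ?_ hmono
    rw [div_le_div_iff₀ hc0 (by positivity)]
    have hW2 : W^2 ≤ sy^2*(16*se^2/(lam^2*sL^2)) := by
      rw [hW, div_pow, div_le_iff₀ (by positivity)]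
      have heq : sy^2*(16*se^2/(lam^2*sL^2))*(lam*sL*sy)^2 = 16*se^2*sy^4 := by
        field_simp
      rw [heq]
      have h4 : se^4 ≤ sy^4 := pow_le_pow_left₀ hse.le h1 4
      nlinarith [mul_le_mul_of_nonneg_left h4 (by positivity : (0:ℝ) ≤ 16*se^2)]
    nlinarith [mul_le_mul_of_nonneg_left hW2 hW0.le, mul_pos (mul_pos hsy hsy) hW0]
  · have hanti := g_anti (y := sy^2) (u := v) (v := lam/4*sL) (by positivity) hv0 hv2
      (by nlinarith)
    refine le_trans ?_ hanti
    rw [div_le_div_iff₀ hc0 (by positivity)]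
    have hA : W*(lam/4*sL) ≤ sy^2 := by
      have heq : W*(lam/4*sL) = se^3/sy := by rw [hW]; field_simp
      rw [heq, div_le_iff₀ hsy]
      nlinarith [pow_le_pow_left₀ hse.le h1 3]
    have hB : W ≤ (lam/4*sL)*(16*se^2/(lam^2*sL^2)) := by
      have heq : (lam/4*sL)*(16*se^2/(lam^2*sL^2)) = 4*se^2/(lam*sL) := by
        field_simp; ring
      rw [heq, hW, div_le_div_iff₀ (by positivity) (by positivity)]
      nlinarith [mul_le_mul_of_nonneg_left h1 (by positivity : (0:ℝ) ≤ se^2),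
        mul_pos hlam0 hsL]
    have h3 := mul_le_mul_of_nonneg_right hA (by positivity : (0:ℝ) ≤ lam/4*sL)
    have h4 := mul_le_mul_of_nonneg_right hB (sq_nonneg sy)
    rw [hc]
    linarith [h3, h4]


lemma core_final {se sx sL lam : ℝ} (hse : 0 < se) (h1 : se ≤ sx) (h2 : sx ≤ sL)
    (hlam : 2 < lam) (hkey : 2 + 32*(se^2/sL^2) ≤ lam*(1 - se/sL)) :
    4*se^3/(lam*sL*sx) ≤ lam/2 *
      ( (4*se^3/(lam*sL)) / (1 + 16*se^2/(lam^2*sL^2)) / (2*sx^2) * (2*sx - 2*se)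
      + (4*se^3/(lam*sL)) / (1 + 16*se^2/(lam^2*sL^2)) / 2 * (2*sx⁻¹ - 2*sL⁻¹) ) := by
  have hsx : 0 < sx := lt_of_lt_of_le hse h1
  have hsL : 0 < sL := lt_of_lt_of_le hsx h2
  have hlam0 : (0:ℝ) < lam := by linarith
  have hc0 : (0:ℝ) < 1 + 16*se^2/(lam^2*sL^2) := by positivity
  have hq' : 2*(1 + 16*se^2/(lam^2*sL^2))*sL ≤ lam*(sL - se) := by
    have h16 : 16*se^2/(lam^2*sL^2) ≤ 16*(se^2/sL^2) := by
      rw [show (16:ℝ)*(se^2/sL^2) = 16*se^2/sL^2 by ring]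
      apply div_le_div_of_nonneg_left (by positivity) (by positivity)
      have hl1 : (1:ℝ) ≤ lam^2 := by nlinarith
      nlinarith [mul_le_mul_of_nonneg_right hl1 (sq_nonneg sL)]
    have hkey' : lam*(1 - se/sL)*sL = lam*(sL - se) := by field_simp
    have h17 : (2 + 32*(se^2/sL^2))*sL ≤ lam*(1 - se/sL)*sL :=
      mul_le_mul_of_nonneg_right hkey hsL.le
    rw [hkey'] at h17
    nlinarith [mul_le_mul_of_nonneg_right h16 hsL.le]
  have hgeom : sx*(sL - se) ≤ 2*sx*sL - se*sL - sx^2 := by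
    nlinarith [mul_nonneg (sub_nonneg.2 h1) (sub_nonneg.2 h2)]
  have hRHSeq : lam/2 *
      ( (4*se^3/(lam*sL)) / (1 + 16*se^2/(lam^2*sL^2)) / (2*sx^2) * (2*sx - 2*se)
      + (4*se^3/(lam*sL)) / (1 + 16*se^2/(lam^2*sL^2)) / 2 * (2*sx⁻¹ - 2*sL⁻¹) )
      = (4*se^3) * (lam*(2*sx*sL - se*sL - sx^2)) /
        (lam*sL*(2*(1 + 16*se^2/(lam^2*sL^2))*(sx^2*sL))) := by
    field_simp
    ring
  rw [hRHSeq, div_le_div_iff₀ (by positivity) (by positivity)]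
  have hmain : 2*(1 + 16*se^2/(lam^2*sL^2))*(sx^2*sL) ≤
      sx*(lam*(2*sx*sL - se*sL - sx^2)) := by
    have hstep1 : sx^2*(2*(1 + 16*se^2/(lam^2*sL^2))*sL) ≤ sx^2*(lam*(sL - se)) :=
      mul_le_mul_of_nonneg_left hq' (sq_nonneg sx)
    have hstep2 : (lam*sx)*(sx*(sL - se)) ≤ (lam*sx)*(2*sx*sL - se*sL - sx^2) :=
      mul_le_mul_of_nonneg_left hgeom (by positivity)
    nlinarith [hstep1, hstep2]
  calc 4*se^3 * (lam*sL*(2*(1 + 16*se^2/(lam^2*sL^2))*(sx^2*sL)))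
      = (lam*sL*sL*(4*se^3)) * (2*(1 + 16*se^2/(lam^2*sL^2))*(sx^2)) := by ring
    _ ≤ (lam*sL*sL*(4*se^3)) * (sx*(lam*(2*sx*sL - se*sL - sx^2))/sL) := by
        apply mul_le_mul_of_nonneg_left _ (by positivity)
        rw [le_div_iff₀ hsL]
        nlinarith [hmain]
    _ = 4*se^3*(lam*(2*sx*sL - se*sL - sx^2))*(lam*sL*sx) := by
        field_simp


lemma wfun_eq {ε Λ lam : ℝ} (hε : 0 < ε) (hΛ : 0 < Λ) {y : ℝ} (hy : 0 < y) :
    wfun lam ε Λ y = 4*(Real.sqrt ε)^3/(lam*Real.sqrt Λ*Real.sqrt y) := by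
  have hse2 : Real.sqrt ε ^ 2 = ε := Real.sq_sqrt hε.le
  have hse3 : Real.sqrt ε ^ 3 = ε * Real.sqrt ε := by
    rw [pow_succ, hse2]
  have hse : 0 < Real.sqrt ε := Real.sqrt_pos.2 hε
  have hsL : 0 < Real.sqrt Λ := Real.sqrt_pos.2 hΛ
  have hsy : 0 < Real.sqrt y := Real.sqrt_pos.2 hy
  rw [wfun, show ε/(Λ*y) = ε * (Λ*y)⁻¹ by ring, Real.sqrt_mul hε.le, Real.sqrt_inv,
    Real.sqrt_mul hΛ.le, hse3]
  field_simp


lemma key_of_ratio {ε Λ lam : ℝ} (hε : 0 < ε) (hεΛ : ε < Λ) (hlam : 2 < lam)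
    (hratio : ε / Λ ≤ min (1 / 16)
      (((Real.sqrt (lam ^ 2 + 128 * (lam - 2)) - lam) / 64) ^ 2)) :
    2 + 32*((Real.sqrt ε)^2/(Real.sqrt Λ)^2) ≤ lam*(1 - Real.sqrt ε/Real.sqrt Λ) := by
  have hΛ : 0 < Λ := lt_trans hε hεΛ
  have hq_eq : Real.sqrt ε / Real.sqrt Λ = Real.sqrt (ε/Λ) := (Real.sqrt_div hε.le Λ).symm
  have hq2 : (Real.sqrt ε)^2/(Real.sqrt Λ)^2 = ε/Λ := by
    rw [Real.sq_sqrt hε.le, Real.sq_sqrt hΛ.le]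
  set q := Real.sqrt (ε/Λ) with hqdef
  have hq0 : 0 ≤ q := Real.sqrt_nonneg _
  have hqsq : q^2 = ε/Λ := Real.sq_sqrt (by positivity)
  set D := lam^2 + 128*(lam - 2) with hD
  have hD0 : 0 ≤ D := by nlinarith
  have hDlam : lam ≤ Real.sqrt D := by
    rw [show lam = Real.sqrt (lam^2) from (Real.sqrt_sq (by linarith)).symm]
    apply Real.sqrt_le_sqrt
    nlinarith
  have hr0 : 0 ≤ (Real.sqrt D - lam)/64 := by linarith
  have hq_le : q ≤ (Real.sqrt D - lam)/64 := by
    have := Real.sqrt_le_sqrt (le_trans hratio (min_le_right _ _))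
    rwa [Real.sqrt_sq hr0] at this
  have hsq : (64*q + lam)^2 ≤ D := by
    have h1 : 64*q + lam ≤ Real.sqrt D := by linarith
    have h2 : (64*q + lam)^2 ≤ (Real.sqrt D)^2 := by
      apply pow_le_pow_left₀ (by linarith) h1
    rwa [Real.sq_sqrt hD0] at h2
  rw [hq2, ← hqsq, hq_eq]
  nlinarith [hsq]


theorem opA_ge {ε Λ lam : ℝ} (hε : 0 < ε) (hεΛ : ε < Λ) (hlam : 2 < lam)
    (hkey : 2 + 32*((Real.sqrt ε)^2/(Real.sqrt Λ)^2) ≤ lam*(1 - Real.sqrt ε/Real.sqrt Λ))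
    {u : ℝ → ℝ} (hu : Continuous u)
    (hb : ∀ y ∈ Set.Icc ε Λ, wfun lam ε Λ y ≤ u y ∧ u y ≤ lam/4 * Real.sqrt Λ)
    {x : ℝ} (hx : x ∈ Set.Icc ε Λ) :
    wfun lam ε Λ x ≤ opA lam ε Λ u x := by
  obtain ⟨hx1, hx2⟩ := hx
  have hΛ : 0 < Λ := lt_trans hε hεΛ
  have hx0 : 0 < x := lt_of_lt_of_le hε hx1
  have hlam0 : (0:ℝ) < lam := by linarith
  have hse : 0 < Real.sqrt ε := Real.sqrt_pos.2 hε
  have hsL : 0 < Real.sqrt Λ := Real.sqrt_pos.2 hΛ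
  have hsx : 0 < Real.sqrt x := Real.sqrt_pos.2 hx0
  have hs1 : Real.sqrt ε ≤ Real.sqrt x := Real.sqrt_le_sqrt hx1
  have hs2 : Real.sqrt x ≤ Real.sqrt Λ := Real.sqrt_le_sqrt hx2
  set se := Real.sqrt ε
  set sL := Real.sqrt Λ
  set sx := Real.sqrt x
  set c : ℝ := 1 + 16*se^2/(lam^2*sL^2) with hc
  have hc0 : 0 < c := by rw [hc]; positivity
  set Cm : ℝ := (4*se^3/(lam*sL))/c with hCm
  have hCm0 : 0 < Cm := by rw [hCm]; positivity
  set m : ℝ → ℝ := fun y => (1/(y + x + |y - x|)) * (Cm * (Real.sqrt y)⁻¹) with hm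
  -- pointwise bound
  have hpw : ∀ y ∈ Set.Icc ε Λ,
      m y ≤ (1/(y + x + |y - x|)) * (y * u y / (y + (u y)^2)) := by
    intro y hy
    have hy0 : 0 < y := lt_of_lt_of_le hε hy.1
    have hsy : 0 < Real.sqrt y := Real.sqrt_pos.2 hy0
    have hker : 0 ≤ 1/(y + x + |y - x|) := by
      have := abs_nonneg (y - x); positivity
    apply mul_le_mul_of_nonneg_left _ hker
    have hw := wfun_eq (lam := lam) hε hΛ hy0
    have hcore := core_lower (sy := Real.sqrt y) (v := u y) hse
      (Real.sqrt_le_sqrt hy.1) (Real.sqrt_le_sqrt hy.2) hlam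
      (by rw [← hw]; exact (hb y hy).1) (hb y hy).2
    rw [Real.sq_sqrt hy0.le] at hcore
    have heq : Cm * (Real.sqrt y)⁻¹ = (4*se^3/(lam*sL*Real.sqrt y))/c := by
      rw [hCm]; field_simp
    rw [heq]
    exact hcore
  -- integrability
  have hm_cont : ContinuousOn m (Set.Icc ε Λ) := by
    rw [hm]
    apply ContinuousOn.mul
    · apply ContinuousOn.div continuousOn_const
      · exact ((continuous_id.add continuous_const).add
          ((continuous_id.sub continuous_const).abs)).continuousOn
      · intro y hy
        have h0 : 0 ≤ |y - x| := abs_nonneg _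
        have h1 : ε ≤ y := hy.1
        exact ne_of_gt (by linarith)
    · apply ContinuousOn.mul continuousOn_const
      apply ContinuousOn.inv₀ Real.continuous_sqrt.continuousOn
      intro y hy
      exact (Real.sqrt_pos.2 (lt_of_lt_of_le hε hy.1)).ne'
  have hm_int : IntervalIntegrable m volume ε Λ := by
    apply ContinuousOn.intervalIntegrable
    rwa [Set.uIcc_of_le hεΛ.le]
  have hint1 : IntervalIntegrable
      (fun y => (1 / (y + x + |y - x|)) * (y * u y / (y + (u y) ^ 2))) volume ε Λ := by
    apply ContinuousOn.intervalIntegrable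
    rw [Set.uIcc_of_le hεΛ.le]
    exact integrand_contOn hε hx1 hu
  have hmono := intervalIntegral.integral_mono_on hεΛ.le hm_int hint1 hpw
  -- split the integral of m
  have hsub_l : Set.uIcc ε x ⊆ Set.uIcc ε Λ := by
    rw [Set.uIcc_of_le hx1, Set.uIcc_of_le hεΛ.le]
    exact Set.Icc_subset_Icc le_rfl hx2
  have hsub_r : Set.uIcc x Λ ⊆ Set.uIcc ε Λ := by
    rw [Set.uIcc_of_le hx2, Set.uIcc_of_le hεΛ.le]
    exact Set.Icc_subset_Icc hx1 le_rfl
  have hm_int_l : IntervalIntegrable m volume ε x := hm_int.mono_set hsub_l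
  have hm_int_r : IntervalIntegrable m volume x Λ := hm_int.mono_set hsub_r
  have hsplit := intervalIntegral.integral_add_adjacent_intervals hm_int_l hm_int_r
  have hleft : ∫ y in ε..x, m y = Cm/(2*x) * (2*sx - 2*se) := by
    have hEq : Set.EqOn m (fun y => (Cm/(2*x)) * (Real.sqrt y)⁻¹) (Set.uIcc ε x) := by
      intro y hy
      rw [Set.uIcc_of_le hx1] at hy
      have hker : y + x + |y - x| = 2*x := by
        rw [abs_of_nonpos (by linarith [hy.2])]; ring
      rw [hm]
      simp only
      rw [hker]
      ring
    rw [intervalIntegral.integral_congr hEq, intervalIntegral.integral_const_mul,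
      integral_inv_sqrt hε hx1]
  have hright : ∫ y in x..Λ, m y = Cm/2 * (2*sx⁻¹ - 2*sL⁻¹) := by
    have hEq : Set.EqOn m (fun y => (Cm/2) * (y * Real.sqrt y)⁻¹) (Set.uIcc x Λ) := by
      intro y hy
      rw [Set.uIcc_of_le hx2] at hy
      have hy0 : 0 < y := lt_of_lt_of_le hx0 hy.1
      have hker : y + x + |y - x| = 2*y := by
        rw [abs_of_nonneg (by linarith [hy.1])]; ring
      rw [hm]
      simp only
      rw [hker, mul_inv]
      ring
    rw [intervalIntegral.integral_congr hEq, intervalIntegral.integral_const_mul,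
      integral_inv_mul_sqrt hx0 hx2]
  -- final combination
  have hfin := core_final hse hs1 hs2 hlam hkey
  have hxsq : x = sx^2 := (Real.sq_sqrt hx0.le).symm
  have hIm : ∫ y in ε..Λ, m y
      = (4*se^3/(lam*sL))/c/(2*sx^2) * (2*sx - 2*se)
      + (4*se^3/(lam*sL))/c/2 * (2*sx⁻¹ - 2*sL⁻¹) := by
    rw [← hsplit, hleft, hright, hCm, ← hxsq]
  have hwx : wfun lam ε Λ x = 4*se^3/(lam*sL*sx) := wfun_eq hε hΛ hx0
  calc wfun lam ε Λ x = 4*se^3/(lam*sL*sx) := hwx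
    _ ≤ lam/2 *
      ( (4*se^3/(lam*sL))/c/(2*sx^2) * (2*sx - 2*se)
      + (4*se^3/(lam*sL))/c/2 * (2*sx⁻¹ - 2*sL⁻¹) ) := by rw [hc]; exact hfin
    _ = lam/2 * ∫ y in ε..Λ, m y := by rw [hIm]
    _ ≤ opA lam ε Λ u x := by
        rw [opA]
        apply mul_le_mul_of_nonneg_left hmono (by positivity)


lemma log_g_lipschitz {ε Λ wm Uu y a b : ℝ} (hε : 0 < ε) (hy : y ∈ Set.Icc ε Λ)
    (hwm : 0 < wm) (ha : a ∈ Set.Icc wm Uu) (hb : b ∈ Set.Icc wm Uu) :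
    |Real.log (y*a/(y+a^2)) - Real.log (y*b/(y+b^2))|
      ≤ (max (1 - 2*(wm^2/(Λ+wm^2))) (2*(Uu^2/(ε+Uu^2)) - 1)) * |Real.log a - Real.log b| := by
  have hy0 : 0 < y := lt_of_lt_of_le hε hy.1
  have hΛ : 0 < Λ := lt_of_lt_of_le hy0 hy.2
  have ha0 : 0 < a := lt_of_lt_of_le hwm ha.1
  have hb0 : 0 < b := lt_of_lt_of_le hwm hb.1
  have hU0 : 0 < Uu := lt_of_lt_of_le ha0 ha.2
  set K := max (1 - 2*(wm^2/(Λ+wm^2))) (2*(Uu^2/(ε+Uu^2)) - 1) with hK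
  set s : Set ℝ := Set.Icc (Real.log wm) (Real.log Uu) with hs
  set φ : ℝ → ℝ := fun τ => Real.log y + τ - Real.log (y + Real.exp τ ^ 2) with hφ
  have hderiv : ∀ τ ∈ s, HasDerivWithinAt φ
      (1 - 2*(Real.exp τ^2/(y + Real.exp τ^2))) s τ := by
    intro τ _
    have hE : 0 < Real.exp τ := Real.exp_pos τ
    have h1 : HasDerivAt (fun τ => Real.exp τ ^ 2) (2*Real.exp τ^2) τ := by
      have := (Real.hasDerivAt_exp τ).pow 2
      refine this.congr_deriv ?_
      ring
    have h2 : HasDerivAt (fun τ => Real.log (y + Real.exp τ ^ 2))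
        ((2*Real.exp τ^2)/(y + Real.exp τ^2)) τ := by
      have h3 := (h1.const_add y).log (by positivity)
      exact h3
    have h4 : HasDerivAt φ (1 - (2*Real.exp τ^2)/(y + Real.exp τ^2)) τ := by
      have h5 := ((hasDerivAt_id τ).const_add (Real.log y)).sub h2
      exact h5
    have h6 : 1 - (2*Real.exp τ^2)/(y + Real.exp τ^2)
        = 1 - 2*(Real.exp τ^2/(y + Real.exp τ^2)) := by ring
    rw [h6] at h4
    exact h4.hasDerivWithinAt
  have hbound : ∀ τ ∈ s, ‖1 - 2*(Real.exp τ^2/(y + Real.exp τ^2))‖ ≤ K := by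
    intro τ hτ
    have hE : 0 < Real.exp τ := Real.exp_pos τ
    have hE1 : wm ≤ Real.exp τ := by
      have := Real.exp_le_exp.2 hτ.1
      rwa [Real.exp_log hwm] at this
    have hE2 : Real.exp τ ≤ Uu := by
      have := Real.exp_le_exp.2 hτ.2
      rwa [Real.exp_log hU0] at this
    have hE1' : wm^2 ≤ Real.exp τ^2 := pow_le_pow_left₀ hwm.le hE1 2
    have hE2' : Real.exp τ^2 ≤ Uu^2 := pow_le_pow_left₀ hE.le hE2 2
    have hb1 : wm^2/(Λ+wm^2) ≤ Real.exp τ^2/(y + Real.exp τ^2) := by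
      rw [div_le_div_iff₀ (by positivity) (by positivity)]
      nlinarith [hy.2, mul_le_mul hE1' hy.2 hy0.le (by positivity : (0:ℝ) ≤ Real.exp τ^2)]
    have hb2 : Real.exp τ^2/(y + Real.exp τ^2) ≤ Uu^2/(ε+Uu^2) := by
      rw [div_le_div_iff₀ (by positivity) (by positivity)]
      nlinarith [hy.1, mul_le_mul hE2' hy.1 hε.le (by positivity : (0:ℝ) ≤ Uu^2)]
    rw [Real.norm_eq_abs, abs_le]
    constructor
    · have := le_max_right (1 - 2*(wm^2/(Λ+wm^2))) (2*(Uu^2/(ε+Uu^2)) - 1)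
      rw [hK]; linarith
    · have := le_max_left (1 - 2*(wm^2/(Λ+wm^2))) (2*(Uu^2/(ε+Uu^2)) - 1)
      rw [hK]; linarith
  have hmema : Real.log a ∈ s := by
    rw [hs]
    exact ⟨Real.log_le_log hwm ha.1, Real.log_le_log ha0 ha.2⟩
  have hmemb : Real.log b ∈ s := by
    rw [hs]
    exact ⟨Real.log_le_log hwm hb.1, Real.log_le_log hb0 hb.2⟩
  have hmvt := Convex.norm_image_sub_le_of_norm_hasDerivWithin_le hderiv hbound
    (convex_Icc _ _) hmemb hmema
  have hφa : φ (Real.log a) = Real.log (y*a/(y+a^2)) := by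
    rw [hφ]
    simp only
    rw [Real.exp_log ha0, Real.log_div (by positivity) (by positivity),
      Real.log_mul hy0.ne' ha0.ne']
  have hφb : φ (Real.log b) = Real.log (y*b/(y+b^2)) := by
    rw [hφ]
    simp only
    rw [Real.exp_log hb0, Real.log_div (by positivity) (by positivity),
      Real.log_mul hy0.ne' hb0.ne']
  rw [hφa, hφb, Real.norm_eq_abs, Real.norm_eq_abs] at hmvt
  exact hmvt

end MN

theorem stmt_9 (ε Λ lam : ℝ) (hε : 0 < ε) (hεΛ : ε < Λ) (hlam : 2 < lam)
    (hratio : ε / Λ ≤ min (1 / 16)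
      (((Real.sqrt (lam ^ 2 + 128 * (lam - 2)) - lam) / 64) ^ 2)) :
    ∃ u₀ : ℝ → ℝ, memV lam ε Λ u₀ ∧
      (∀ x ∈ Set.Icc ε Λ, 0 < wfun lam ε Λ x) ∧
      ∀ x ∈ Set.Icc ε Λ, u₀ x = opA lam ε Λ u₀ x := by
  have hΛ : 0 < Λ := lt_trans hε hεΛ
  have hlam0 : (0:ℝ) < lam := by linarith
  have hkey := MN.key_of_ratio hε hεΛ hlam hratio
  have hse : 0 < Real.sqrt ε := Real.sqrt_pos.2 hε
  have hsL : 0 < Real.sqrt Λ := Real.sqrt_pos.2 hΛ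
  have hse2 : Real.sqrt ε ^ 2 = ε := Real.sq_sqrt hε.le
  have hsL2 : Real.sqrt Λ ^ 2 = Λ := Real.sq_sqrt hΛ.le
  have h116 : ε / Λ ≤ 1/16 := le_trans hratio (min_le_left _ _)
  have hε16 : 16 * ε ≤ lam^2 * Λ := by
    rw [div_le_iff₀ hΛ] at h116
    have h9 : (1:ℝ) ≤ lam^2 := by nlinarith
    nlinarith [mul_le_mul_of_nonneg_right h9 hΛ.le]
  set U : ℝ := lam/4 * Real.sqrt Λ with hU
  have hU0 : 0 < U := by rw [hU]; positivity
  -- basic facts about wfun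
  have hw_pos : ∀ x ∈ Set.Icc ε Λ, 0 < wfun lam ε Λ x := by
    intro x hx
    have hx0 : 0 < x := lt_of_lt_of_le hε hx.1
    rw [MN.wfun_eq hε hΛ hx0]
    have := Real.sqrt_pos.2 hx0
    positivity
  have hw_le_U : ∀ x ∈ Set.Icc ε Λ, wfun lam ε Λ x ≤ U := by
    intro x hx
    have hx0 : 0 < x := lt_of_lt_of_le hε hx.1
    have hsx : 0 < Real.sqrt x := Real.sqrt_pos.2 hx0
    have hs1 : Real.sqrt ε ≤ Real.sqrt x := Real.sqrt_le_sqrt hx.1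
    rw [MN.wfun_eq hε hΛ hx0, hU, div_le_iff₀ (by positivity)]
    have h1 : Real.sqrt ε ^2 * Real.sqrt ε ≤ Real.sqrt ε ^2 * Real.sqrt x :=
      mul_le_mul_of_nonneg_left hs1 (by positivity)
    have h2 : (16*ε) * Real.sqrt x ≤ (lam^2*Λ) * Real.sqrt x :=
      mul_le_mul_of_nonneg_right hε16 hsx.le
    have h8 : lam^2*Λ*Real.sqrt x = lam^2*(Real.sqrt Λ)^2*Real.sqrt x := by rw [hsL2]
    have h9 : Real.sqrt ε^2*Real.sqrt x = ε*Real.sqrt x := by rw [hse2]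
    nlinarith [h1, h2, h8, h9]
  set wm : ℝ := wfun lam ε Λ Λ with hwm
  have hwm0 : 0 < wm := hw_pos Λ ⟨hεΛ.le, le_rfl⟩
  have hwm_le : ∀ y ∈ Set.Icc ε Λ, wm ≤ wfun lam ε Λ y := by
    intro y hy
    have hy0 : 0 < y := lt_of_lt_of_le hε hy.1
    rw [hwm, MN.wfun_eq hε hΛ hΛ, MN.wfun_eq hε hΛ hy0]
    apply div_le_div_of_nonneg_left (by positivity) (by positivity)
    have := Real.sqrt_le_sqrt hy.2
    have hsy : 0 < Real.sqrt y := Real.sqrt_pos.2 hy0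
    nlinarith
  -- the contraction constant
  set K : ℝ := max (1 - 2*(wm^2/(Λ+wm^2))) (2*(U^2/(ε+U^2)) - 1) with hK
  have hUsq : ε ≤ U^2 := by
    rw [hU]
    nlinarith [hsL2]
  have hK0 : 0 ≤ K := by
    have h1 : (1:ℝ)/2 ≤ U^2/(ε+U^2) := by
      rw [div_le_div_iff₀ (by norm_num) (by positivity)]
      linarith
    refine le_trans ?_ (le_max_right _ _)
    linarith
  have hK1 : K < 1 := by
    rw [hK]
    apply max_lt
    · have : 0 < wm^2/(Λ+wm^2) := by positivity
      linarith
    · have : U^2/(ε+U^2) < 1 := by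
        rw [div_lt_one (by positivity)]
        linarith
      linarith
  -- the space
  set S : Set C(↥(Set.Icc ε Λ), ℝ) :=
    {f | ∀ z : ↥(Set.Icc ε Λ), Real.log (wfun lam ε Λ z) ≤ f z ∧ f z ≤ Real.log U} with hS
  have hSclosed : IsClosed S := by
    have : S = ⋂ z : ↥(Set.Icc ε Λ),
        {f : C(↥(Set.Icc ε Λ), ℝ) |
          f z ∈ Set.Icc (Real.log (wfun lam ε Λ z)) (Real.log U)} := by
      ext f
      simp [hS, Set.mem_iInter, Set.mem_Icc]
    rw [this]
    exact isClosed_iInter fun z =>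
      (isClosed_Icc.preimage (continuous_eval_const z))
  have hSne : S.Nonempty := by
    refine ⟨ContinuousMap.const _ (Real.log U), fun z => ⟨?_, le_rfl⟩⟩
    exact Real.log_le_log (hw_pos z z.2) (hw_le_U z z.2)
  -- the function associated to an element of C
  set uF : C(↥(Set.Icc ε Λ), ℝ) → ℝ → ℝ :=
    fun f t => Real.exp (f (Set.projIcc ε Λ hεΛ.le t)) with huF
  have huF_cont : ∀ f, Continuous (uF f) := fun f =>
    Real.continuous_exp.comp (f.continuous.comp continuous_projIcc)
  have huF_pos : ∀ f t, 0 < uF f t := fun f t => Real.exp_pos _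
  have huF_mem : ∀ f ∈ S, ∀ t ∈ Set.Icc ε Λ,
      wfun lam ε Λ t ≤ uF f t ∧ uF f t ≤ U := by
    intro f hf t ht
    have := hf ⟨t, ht⟩
    rw [huF]
    simp only [Set.projIcc_of_mem hεΛ.le ht]
    constructor
    · calc wfun lam ε Λ t = Real.exp (Real.log (wfun lam ε Λ t)) :=
            (Real.exp_log (hw_pos t ht)).symm
        _ ≤ Real.exp (f ⟨t, ht⟩) := Real.exp_le_exp.2 this.1
    · calc Real.exp (f ⟨t, ht⟩) ≤ Real.exp (Real.log U) := Real.exp_le_exp.2 this.2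
        _ = U := Real.exp_log hU0
  -- facts about opA for members of S
  have hopA_ge : ∀ f ∈ S, ∀ x ∈ Set.Icc ε Λ,
      wfun lam ε Λ x ≤ opA lam ε Λ (uF f) x := fun f hf x hx =>
    MN.opA_ge hε hεΛ hlam hkey (huF_cont f) (fun y hy => huF_mem f hf y hy) hx
  have hopA_pos : ∀ f ∈ S, ∀ x ∈ Set.Icc ε Λ, 0 < opA lam ε Λ (uF f) x :=
    fun f hf x hx => lt_of_lt_of_le (hw_pos x hx) (hopA_ge f hf x hx)
  have hopA_le : ∀ f ∈ S, ∀ x ∈ Set.Icc ε Λ, opA lam ε Λ (uF f) x ≤ U :=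
    fun f hf x hx => MN.opA_le hε hεΛ hlam0 (huF_cont f)
      (fun y hy => (huF_pos f y).le) hx
  -- the map T
  have hTcont : ∀ f ∈ S, Continuous ((Set.Icc ε Λ).restrict
      (fun x => Real.log (opA lam ε Λ (uF f) x))) := by
    intro f hf
    unfold Set.restrict
    rw [← continuousOn_iff_continuous_domRestrict]
    exact (MN.opA_contOn hε hεΛ hlam0 (huF_cont f) (fun y hy => (huF_pos f y).le)).log
      (fun x hx => (hopA_pos f hf x hx).ne')
  set T : ↥S → ↥S := fun f =>
    ⟨⟨(Set.Icc ε Λ).restrict (fun x => Real.log (opA lam ε Λ (uF f.1) x)),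
        hTcont f.1 f.2⟩, by
      intro z
      constructor
      · exact Real.log_le_log (hw_pos z z.2) (hopA_ge f.1 f.2 z z.2)
      · exact Real.log_le_log (hopA_pos f.1 f.2 z z.2) (hopA_le f.1 f.2 z z.2)⟩
    with hT
  -- contraction estimate
  have hcontr : ∀ f g : ↥S, dist (T f) (T g) ≤ K * dist f g := by
    intro f g
    set d := dist f g with hd
    have hd0 : 0 ≤ d := dist_nonneg
    -- one-sided comparison
    have hcmp : ∀ f' g' : ↥S, ∀ x ∈ Set.Icc ε Λ, dist f' g' = d →
        opA lam ε Λ (uF f'.1) x ≤ Real.exp (K*d) * opA lam ε Λ (uF g'.1) x := by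
      intro f' g' x hx hdist
      have hint_f : IntervalIntegrable (fun y => (1 / (y + x + |y - x|)) *
          (y * uF f'.1 y / (y + (uF f'.1 y) ^ 2))) volume ε Λ := by
        apply ContinuousOn.intervalIntegrable
        rw [Set.uIcc_of_le hεΛ.le]
        exact MN.integrand_contOn hε hx.1 (huF_cont f'.1)
      have hint_g : IntervalIntegrable (fun y => (1 / (y + x + |y - x|)) *
          (y * uF g'.1 y / (y + (uF g'.1 y) ^ 2))) volume ε Λ := by
        apply ContinuousOn.intervalIntegrable
        rw [Set.uIcc_of_le hεΛ.le]
        exact MN.integrand_contOn hε hx.1 (huF_cont g'.1)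
      have hpw : ∀ y ∈ Set.Icc ε Λ,
          (1 / (y + x + |y - x|)) * (y * uF f'.1 y / (y + (uF f'.1 y) ^ 2))
          ≤ Real.exp (K*d) * ((1 / (y + x + |y - x|)) *
            (y * uF g'.1 y / (y + (uF g'.1 y) ^ 2))) := by
        intro y hy
        have hy0 : 0 < y := lt_of_lt_of_le hε hy.1
        set a := uF f'.1 y with hadef
        set b := uF g'.1 y with hbdef
        have ha0 : 0 < a := huF_pos f'.1 y
        have hb0 : 0 < b := huF_pos g'.1 y
        have hamem : a ∈ Set.Icc wm U := ⟨le_trans (hwm_le y hy)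
          (huF_mem f'.1 f'.2 y hy).1, (huF_mem f'.1 f'.2 y hy).2⟩
        have hbmem : b ∈ Set.Icc wm U := ⟨le_trans (hwm_le y hy)
          (huF_mem g'.1 g'.2 y hy).1, (huF_mem g'.1 g'.2 y hy).2⟩
        have hlip := MN.log_g_lipschitz hε hy hwm0 hamem hbmem
        have hlogab : |Real.log a - Real.log b| ≤ d := by
          have h1 : Real.log a = f'.1 (Set.projIcc ε Λ hεΛ.le y) := by
            rw [hadef, huF]; exact Real.log_exp _
          have h2 : Real.log b = g'.1 (Set.projIcc ε Λ hεΛ.le y) := by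
            rw [hbdef, huF]; exact Real.log_exp _
          rw [h1, h2, ← Real.dist_eq, ← hdist]
          have := ContinuousMap.dist_apply_le_dist
            (f := f'.1) (g := g'.1) (Set.projIcc ε Λ hεΛ.le y)
          calc dist (f'.1 (Set.projIcc ε Λ hεΛ.le y)) (g'.1 (Set.projIcc ε Λ hεΛ.le y))
              ≤ dist f'.1 g'.1 := this
            _ = dist f' g' := (Subtype.dist_eq f' g').symm
        have hKd : |Real.log (y*a/(y+a^2)) - Real.log (y*b/(y+b^2))| ≤ K*d := by
          refine le_trans hlip ?_
          rw [← hK]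
          exact mul_le_mul_of_nonneg_left hlogab hK0
        have hga : 0 < y*a/(y+a^2) := by positivity
        have hgb : 0 < y*b/(y+b^2) := by positivity
        have hgag : y*a/(y+a^2) ≤ Real.exp (K*d) * (y*b/(y+b^2)) := by
          have h3 : Real.log (y*a/(y+a^2)) ≤ K*d + Real.log (y*b/(y+b^2)) := by
            have := (abs_le.1 hKd).2
            linarith
          calc y*a/(y+a^2) = Real.exp (Real.log (y*a/(y+a^2))) :=
                (Real.exp_log hga).symm
            _ ≤ Real.exp (K*d + Real.log (y*b/(y+b^2))) := Real.exp_le_exp.2 h3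
            _ = Real.exp (K*d) * (y*b/(y+b^2)) := by
                rw [Real.exp_add, Real.exp_log hgb]
        have hker : 0 ≤ 1/(y + x + |y - x|) := by
          have h5 := abs_nonneg (y - x)
          have h6 : ε ≤ y := hy.1
          have h7 : ε ≤ x := hx.1
          exact one_div_nonneg.2 (by linarith)
        calc (1 / (y + x + |y - x|)) * (y * a / (y + a ^ 2))
            ≤ (1 / (y + x + |y - x|)) * (Real.exp (K*d) * (y * b / (y + b ^ 2))) :=
              mul_le_mul_of_nonneg_left hgag hker
          _ = Real.exp (K*d) * ((1 / (y + x + |y - x|)) * (y * b / (y + b ^ 2))) := by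
              ring
      have hmono := intervalIntegral.integral_mono_on hεΛ.le hint_f
        (hint_g.const_mul _) hpw
      rw [intervalIntegral.integral_const_mul] at hmono
      rw [opA, opA]
      calc lam/2 * ∫ y in ε..Λ, (1 / (y + x + |y - x|)) *
            (y * uF f'.1 y / (y + (uF f'.1 y) ^ 2))
          ≤ lam/2 * (Real.exp (K*d) * ∫ y in ε..Λ, (1 / (y + x + |y - x|)) *
            (y * uF g'.1 y / (y + (uF g'.1 y) ^ 2))) :=
            mul_le_mul_of_nonneg_left hmono (by positivity)
        _ = Real.exp (K*d) * (lam/2 * ∫ y in ε..Λ, (1 / (y + x + |y - x|)) *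
            (y * uF g'.1 y / (y + (uF g'.1 y) ^ 2))) := by ring
    -- pointwise log estimate
    have hptwise : ∀ z : ↥(Set.Icc ε Λ), dist ((T f).1 z) ((T g).1 z) ≤ K*d := by
      intro z
      have h1 := hcmp f g z z.2 rfl
      have h2 := hcmp g f z z.2 (by rw [hd, dist_comm])
      have hpf := hopA_pos f.1 f.2 z z.2
      have hpg := hopA_pos g.1 g.2 z z.2
      have h3 : Real.log (opA lam ε Λ (uF f.1) z) ≤
          K*d + Real.log (opA lam ε Λ (uF g.1) z) := by
        calc Real.log (opA lam ε Λ (uF f.1) z)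
            ≤ Real.log (Real.exp (K*d) * opA lam ε Λ (uF g.1) z) :=
              Real.log_le_log hpf h1
          _ = K*d + Real.log (opA lam ε Λ (uF g.1) z) := by
              rw [Real.log_mul (Real.exp_pos _).ne' hpg.ne', Real.log_exp]
      have h4 : Real.log (opA lam ε Λ (uF g.1) z) ≤
          K*d + Real.log (opA lam ε Λ (uF f.1) z) := by
        calc Real.log (opA lam ε Λ (uF g.1) z)
            ≤ Real.log (Real.exp (K*d) * opA lam ε Λ (uF f.1) z) :=
              Real.log_le_log hpg h2
          _ = K*d + Real.log (opA lam ε Λ (uF f.1) z) := by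
              rw [Real.log_mul (Real.exp_pos _).ne' hpf.ne', Real.log_exp]
      rw [Real.dist_eq]
      rw [hT]
      simp only [ContinuousMap.coe_mk, Set.restrict, Set.domRestrict_apply]
      rw [abs_le]
      constructor <;> linarith
    rw [Subtype.dist_eq]
    exact (ContinuousMap.dist_le (by positivity)).2 hptwise
  -- apply the Banach fixed point theorem
  haveI : Nonempty ↥S := hSne.to_subtype
  haveI : CompleteSpace ↥S := hSclosed.completeSpace_coe
  have hcontracting : ContractingWith ⟨K, hK0⟩ T := by
    constructor
    · exact_mod_cast hK1
    · exact LipschitzWith.of_dist_le_mul hcontr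
  set F := hcontracting.fixedPoint T with hF
  have hfix : T F = F := hcontracting.fixedPoint_isFixedPt
  refine ⟨uF F.1, ⟨(huF_cont F.1).continuousOn, fun x hx => huF_mem F.1 F.2 x hx⟩,
    hw_pos, ?_⟩
  intro x hx
  have h1 : (T F).1 ⟨x, hx⟩ = F.1 ⟨x, hx⟩ := by rw [hfix]
  have h2 : (T F).1 ⟨x, hx⟩ = Real.log (opA lam ε Λ (uF F.1) x) := by
    rw [hT]
    simp only [ContinuousMap.coe_mk, Set.restrict, Set.domRestrict_apply]
  have h3 : uF F.1 x = Real.exp (F.1 ⟨x, hx⟩) := by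
    rw [huF]
    simp only [Set.projIcc_of_mem hεΛ.le hx]
  rw [h3, ← h1, h2, Real.exp_log (hopA_pos F.1 F.2 x hx)]
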